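/- Under the hierarchy relations q_p' = q_{p+1} - q_0 u_p and u_p' = -q_0 q_p, the derivative of the quantity I_n(s) = u_{2n+1} + (1/2) ∑_{k=0}^{2n} (-1)^{k+1} [u_k u_{2n-k} - q_k q_{2n-k}] vanishes identically (the sum telescopes to zero). -/

import Mathlib

lemma tele_aux (a : ℕ → ℝ) (m : ℕ) :
    ∑ k ∈ Finset.range (m + 1), (-1 : ℝ) ^ k * (a k + a (k + 1))
      = a 0 + (-1 : ℝ) ^ m * a (m + 1) := by
  induction m with
  | zero => simp
  | succ m ih => rw [Finset.sum_range_succ, ih]; ring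

theorem stmt2 (q u : ℕ → ℝ → ℝ)
    (hdiff : ∀ p, Differentiable ℝ (q p) ∧ Differentiable ℝ (u p))
    (hq : ∀ p s, deriv (q p) s = q (p + 1) s - q 0 s * u p s)
    (hu : ∀ p s, deriv (u p) s = -(q 0 s) * q p s) :
    ∀ (n : ℕ) (s : ℝ),
      deriv (fun t => u (2 * n + 1) t + (1 / 2) * ∑ k ∈ Finset.range (2 * n + 1),
        (-1 : ℝ) ^ (k + 1) * (u k t * u (2 * n - k) t - q k t * q (2 * n - k) t)) s = 0 := by
  intro n s
  have Hu : ∀ p, HasDerivAt (u p) (-(q 0 s) * q p s) s := by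
    intro p
    have h := ((hdiff p).2.differentiableAt (x := s)).hasDerivAt
    rwa [hu] at h
  have Hq : ∀ p, HasDerivAt (q p) (q (p + 1) s - q 0 s * u p s) s := by
    intro p
    have h := ((hdiff p).1.differentiableAt (x := s)).hasDerivAt
    rwa [hq] at h
  have Hterm : ∀ k ∈ Finset.range (2 * n + 1),
      HasDerivAt (fun t => (-1 : ℝ) ^ (k + 1) *
          (u k t * u (2 * n - k) t - q k t * q (2 * n - k) t))
        ((-1 : ℝ) ^ (k + 1) *
          ((-(q 0 s) * q k s) * u (2 * n - k) s + u k s * (-(q 0 s) * q (2 * n - k) s)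
            - ((q (k + 1) s - q 0 s * u k s) * q (2 * n - k) s
              + q k s * (q (2 * n - k + 1) s - q 0 s * u (2 * n - k) s)))) s := by
    intro k _
    exact (((Hu k).mul (Hu (2 * n - k))).sub ((Hq k).mul (Hq (2 * n - k)))).const_mul _
  have Hsum := (HasDerivAt.fun_sum Hterm).const_mul (1 / 2 : ℝ)
  have Htot := (Hu (2 * n + 1)).fun_add Hsum
  rw [Htot.deriv]
  -- now pure algebra
  have hcongr : ∑ k ∈ Finset.range (2 * n + 1),
      ((-1 : ℝ) ^ (k + 1) *
        ((-(q 0 s) * q k s) * u (2 * n - k) s + u k s * (-(q 0 s) * q (2 * n - k) s)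
          - ((q (k + 1) s - q 0 s * u k s) * q (2 * n - k) s
            + q k s * (q (2 * n - k + 1) s - q 0 s * u (2 * n - k) s))))
      = ∑ k ∈ Finset.range (2 * n + 1),
        (-1 : ℝ) ^ k * ((fun j => q j s * q (2 * n + 1 - j) s) k
          + (fun j => q j s * q (2 * n + 1 - j) s) (k + 1)) := by
    apply Finset.sum_congr rfl
    intro k hk
    have hk' : k ≤ 2 * n := by
      have := Finset.mem_range.mp hk; omega
    have h1 : 2 * n - k + 1 = 2 * n + 1 - k := by omega
    have h2 : 2 * n + 1 - (k + 1) = 2 * n - k := by omega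
    simp only [h1, h2]
    ring
  rw [hcongr, tele_aux (fun j => q j s * q (2 * n + 1 - j) s) (2 * n)]
  have he : ((-1 : ℝ)) ^ (2 * n) = 1 := by
    simp [pow_mul]
  simp only [he, Nat.sub_self, Nat.sub_zero]
  ring
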